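/- Let μ⁰ > 0, λ > 0 and c ∈ ℝⁿ. Let s⁰ be the unique minimizer over the positive orthant of (1/2)‖s − c‖² − μ⁰ Σᵢ log sᵢ, and set z⁰ = (s⁰ − c)/λ. Then every component of s⁰ is strictly positive, every component of z⁰ is strictly positive, s⁰ᵢ z⁰ᵢ = μ⁰/λ for every i, and ⟨s⁰, z⁰⟩ = n μ⁰/λ. -/

import Mathlib

/-- The smoothing objective for the nonnegative cone:
`f_μ(s) = (1/2)‖s − c‖² − μ Σᵢ log sᵢ`. -/
noncomputable def posOrthBarrierObj (n : ℕ) (μ : ℝ) (c : EuclideanSpace ℝ (Fin n))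
    (s : EuclideanSpace ℝ (Fin n)) : ℝ :=
  (1 / 2) * ‖s - c‖ ^ 2 - μ * ∑ i, Real.log (s i)

lemma key1d (a μ t0 : ℝ) (ht0 : 0 < t0)
    (h : ∀ t, 0 < t → (1/2)*(t0-a)^2 - μ*Real.log t0 ≤ (1/2)*(t-a)^2 - μ*Real.log t) :
    t0 * (t0 - a) = μ := by
  set g : ℝ → ℝ := fun t => (1/2)*(t-a)^2 - μ*Real.log t with hg
  have hderiv : HasDerivAt g ((t0 - a) - μ/t0) t0 := by
    have h1 : HasDerivAt (fun t : ℝ => (1/2)*(t-a)^2) ((1/2)*(2*(t0-a))) t0 := by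
      have := (((hasDerivAt_id t0).sub_const a).pow 2).const_mul (1/2 : ℝ)
      simpa using this
    have h2 : HasDerivAt (fun t : ℝ => μ * Real.log t) (μ * t0⁻¹) t0 :=
      (Real.hasDerivAt_log ht0.ne').const_mul μ
    have : HasDerivAt g (1 / 2 * (2 * (t0 - a)) - μ * t0⁻¹) t0 := h1.sub h2
    convert this using 1
    ring
  have hloc : IsLocalMin g t0 := by
    filter_upwards [eventually_gt_nhds ht0] with t ht
    exact h t ht
  have h0 : (t0 - a) - μ/t0 = 0 := hloc.hasDerivAt_eq_zero hderiv
  field_simp at h0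
  linarith [h0]

lemma obj_eq (n : ℕ) (μ : ℝ) (c s : EuclideanSpace ℝ (Fin n)) :
    posOrthBarrierObj n μ c s =
      ∑ i, ((1/2) * (s i - c i)^2 - μ * Real.log (s i)) := by
  unfold posOrthBarrierObj
  rw [Finset.sum_sub_distrib, ← Finset.mul_sum, ← Finset.mul_sum]
  congr 1
  congr 1
  have := EuclideanSpace.norm_eq (s - c)
  rw [this, Real.sq_sqrt (by positivity)]
  congr 1
  ext i
  simp [sq_abs]

/-- Let `μ⁰ > 0`, `λ > 0`, `c ∈ ℝⁿ`, let `s⁰` be the (unique) minimizer of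
`(1/2)‖s − c‖² − μ⁰ Σᵢ log sᵢ` over the positive orthant, and `z⁰ = (s⁰ − c)/λ`.
Then every component of `s⁰` and of `z⁰` is strictly positive,
`s⁰ᵢ z⁰ᵢ = μ⁰/λ` for every `i`, and `⟨s⁰, z⁰⟩ = n μ⁰/λ`. -/
theorem stmt6 (n : ℕ) (μ0 lam : ℝ) (hμ : 0 < μ0) (hlam : 0 < lam)
    (c s0 : EuclideanSpace ℝ (Fin n))
    (hpos : ∀ i, 0 < s0 i)
    (hmin : ∀ s : EuclideanSpace ℝ (Fin n), (∀ i, 0 < s i) →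
      posOrthBarrierObj n μ0 c s0 ≤ posOrthBarrierObj n μ0 c s) :
    let z0 : EuclideanSpace ℝ (Fin n) := lam⁻¹ • (s0 - c)
    (∀ i, 0 < s0 i) ∧ (∀ i, 0 < z0 i) ∧ (∀ i, s0 i * z0 i = μ0 / lam) ∧
    ∑ i, s0 i * z0 i = n * μ0 / lam := by
  intro z0
  have hz0 : ∀ i, z0 i = lam⁻¹ * (s0 i - c i) := by
    intro i; simp [z0]
  have hstat : ∀ i, s0 i * (s0 i - c i) = μ0 := by
    intro i
    apply key1d (c i) μ0 (s0 i) (hpos i)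
    intro t ht
    have hupd : ∀ j, 0 < (Function.update (s0 : Fin n → ℝ) i t : Fin n → ℝ) j := by
      intro j
      rcases eq_or_ne j i with rfl | hj
      · simpa using ht
      · simpa [Function.update_of_ne hj] using hpos j
    have := hmin (WithLp.toLp 2 (Function.update (s0 : Fin n → ℝ) i t)) hupd
    simp only [WithLp.ofLp_toLp] at this
    rw [obj_eq, obj_eq] at this
    have hsum : ∀ (u : Fin n → ℝ),
        ∑ j, ((1/2) * (u j - c j)^2 - μ0 * Real.log (u j)) =
          ((1/2) * (u i - c i)^2 - μ0 * Real.log (u i)) +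
          ∑ j ∈ Finset.univ.erase i, ((1/2) * (u j - c j)^2 - μ0 * Real.log (u j)) := by
      intro u
      exact (Finset.add_sum_erase _ _ (Finset.mem_univ i)).symm
    rw [hsum, hsum] at this
    have heq : ∑ j ∈ Finset.univ.erase i,
        ((1/2) * ((Function.update (s0 : Fin n → ℝ) i t : Fin n → ℝ) j - c j)^2 -
          μ0 * Real.log ((Function.update (s0 : Fin n → ℝ) i t : Fin n → ℝ) j)) =
        ∑ j ∈ Finset.univ.erase i, ((1/2) * (s0 j - c j)^2 - μ0 * Real.log (s0 j)) := by
      apply Finset.sum_congr rfl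
      intro j hj
      rw [Function.update_of_ne (Finset.ne_of_mem_erase hj)]
    rw [heq] at this
    simpa using this
  have hsc : ∀ i, 0 < s0 i - c i := by
    intro i
    have h := hstat i
    nlinarith [hpos i]
  have hzpos : ∀ i, 0 < z0 i := by
    intro i
    rw [hz0 i]
    exact mul_pos (inv_pos.mpr hlam) (hsc i)
  have hprod : ∀ i, s0 i * z0 i = μ0 / lam := by
    intro i
    rw [hz0 i]
    field_simp
    linear_combination hstat i
  refine ⟨hpos, hzpos, hprod, ?_⟩
  rw [Finset.sum_congr rfl (fun i _ => hprod i)]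
  simp [Finset.sum_const, mul_div_assoc]
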